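/- Let Γ be a simple (hole-free) finite connected induced subgraph of the triangular grid, let q ∈ {x,y,z}, let P be a q-portal of Γ with P ≠ V, and let C be a connected component of the subgraph of Γ induced on V∖P. Then the set C ∪ P induces a connected subgraph of G_Δ and C ∪ P has no inner holes (i.e., splitting a simple region at a portal yields simple regions). -/

import Mathlib

open SimpleGraph

/-- The infinite triangular grid graph on `ℤ × ℤ`. -/
def triGrid : SimpleGraph (ℤ × ℤ) where
  Adj u v := u - v = (1, 0) ∨ u - v = (-1, 0) ∨ u - v = (0, 1) ∨ u - v = (0, -1) ∨
    u - v = (1, -1) ∨ u - v = (-1, 1)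
  symm := by
    constructor
    intro u v h
    have hvu : v - u = -(u - v) := by ring
    rcases h with h | h | h | h | h | h <;> rw [hvu, h] <;> simp [Prod.ext_iff]
  loopless := by
    constructor
    intro u h
    simp [Prod.ext_iff] at h

/-- A finite set is hole-free (simple) if every connected component of the complement
is infinite, i.e., there are no inner holes. -/
def HoleFree (S : Set (ℤ × ℤ)) : Prop :=
  ∀ C : (triGrid.induce Sᶜ).ConnectedComponent, C.supp.Infinite

/-- The graph on `V` whose edges are the edges of the induced grid graph in direction `±e`. -/
def portalLineGraph (V : Set (ℤ × ℤ)) (e : ℤ × ℤ) : SimpleGraph V where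
  Adj u v := triGrid.Adj u v ∧ ((u : ℤ × ℤ) - v = e ∨ (v : ℤ × ℤ) - u = e)
  symm := ⟨fun u v ⟨h, h'⟩ => ⟨h.symm, h'.symm⟩⟩
  loopless := ⟨fun u ⟨h, _⟩ => triGrid.irrefl h⟩

/-- The `e`-portals of the induced subgraph on `V`: connected components of `portalLineGraph`. -/
abbrev Portal (V : Set (ℤ × ℤ)) (e : ℤ × ℤ) := (portalLineGraph V e).ConnectedComponent

/-- The portal containing a given vertex. -/
def portalMk (V : Set (ℤ × ℤ)) (e : ℤ × ℤ) (u : V) : Portal V e :=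
  (portalLineGraph V e).connectedComponentMk u

/-- The `e`-portal graph: vertices are the `e`-portals, two portals being adjacent iff
some edge of the induced grid graph joins them. -/
def portalGraph (V : Set (ℤ × ℤ)) (e : ℤ × ℤ) : SimpleGraph (Portal V e) where
  Adj P Q := P ≠ Q ∧ ∃ u v : V, (triGrid.induce V).Adj u v ∧
    portalMk V e u = P ∧ portalMk V e v = Q
  symm := ⟨fun P Q ⟨hne, u, v, h, hu, hv⟩ => ⟨hne.symm, v, u, h.symm, hv, hu⟩⟩
  loopless := ⟨fun P h => h.1 rfl⟩

/-- Distance between the portals of `u` and `v` in the `e`-portal graph. -/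
noncomputable def portalDist (V : Set (ℤ × ℤ)) (e : ℤ × ℤ) (u v : V) : ℕ :=
  (portalGraph V e).dist (portalMk V e u) (portalMk V e v)

/-- A set `P` is an `e`-portal of the induced subgraph on `V` (as a set of grid points). -/
def IsPortal (V : Set (ℤ × ℤ)) (e : ℤ × ℤ) (P : Set (ℤ × ℤ)) : Prop :=
  ∃ C : Portal V e, P = Subtype.val '' C.supp

/-- `R` is geodesically convex in the subgraph induced on `V`: for all `u, v ∈ R`,
every shortest `u`–`v` path in the induced graph stays inside `R`. -/
def GeodesicallyConvex (V R : Set (ℤ × ℤ)) : Prop :=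
  ∀ u v : V, (u : ℤ × ℤ) ∈ R → (v : ℤ × ℤ) ∈ R →
    ∀ p : (triGrid.induce V).Walk u v, p.length = (triGrid.induce V).dist u v →
      ∀ w ∈ p.support, (w : ℤ × ℤ) ∈ R

/-- transverse functional -/
def tf (e u : ℤ × ℤ) : ℤ := u.1 * e.2 - u.2 * e.1

lemma tf_add (e u v : ℤ × ℤ) : tf e (u + v) = tf e u + tf e v := by
  simp [tf]; ring

lemma tf_portal_edge (e : ℤ × ℤ) {u v : ℤ × ℤ} (h : u - v = e ∨ v - u = e) :
    tf e u = tf e v := by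
  rcases h with h | h
  · have hu : u = e + v := sub_eq_iff_eq_add.mp h
    subst hu; simp [tf]; ring
  · have hv : v = e + u := sub_eq_iff_eq_add.mp h
    subst hv; simp [tf]; ring

lemma tf_const_on_portal (V : Set (ℤ × ℤ)) (e : ℤ × ℤ) {u v : ↥V}
    (h : (portalLineGraph V e).Reachable u v) : tf e u.1 = tf e v.1 := by
  obtain ⟨w⟩ := h
  induction w with
  | nil => rfl
  | cons h w ih => exact (tf_portal_edge e h.2).trans ih

lemma dirs (e : ℤ × ℤ) (he : e ∈ ({(1, 0), (0, 1), (1, -1)} : Set (ℤ × ℤ))) :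
    ∃ d₁ d₂ : ℤ × ℤ, tf e d₁ = 1 ∧ tf e d₂ = -1 ∧
      (∀ h : ℤ × ℤ, triGrid.Adj (h + d₁) h) ∧ (∀ h : ℤ × ℤ, triGrid.Adj (h + d₂) h) := by
  have adj : ∀ d : ℤ × ℤ, (d = (1,0) ∨ d = (-1,0) ∨ d = (0,1) ∨ d = (0,-1) ∨
      d = (1,-1) ∨ d = (-1,1)) → ∀ h : ℤ × ℤ, triGrid.Adj (h + d) h := by
    intro d hd h
    show (h + d) - h = (1,0) ∨ (h + d) - h = (-1,0) ∨ (h + d) - h = (0,1) ∨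
      (h + d) - h = (0,-1) ∨ (h + d) - h = (1,-1) ∨ (h + d) - h = (-1,1)
    have hsub : (h + d) - h = d := by ring
    rw [hsub]; exact hd
  simp only [Set.mem_insert_iff, Set.mem_singleton_iff] at he
  rcases he with rfl | rfl | rfl
  · exact ⟨(0,-1), (0,1), by decide, by decide, adj _ (by decide), adj _ (by decide)⟩
  · exact ⟨(1,0), (-1,0), by decide, by decide, adj _ (by decide), adj _ (by decide)⟩
  · exact ⟨(0,-1), (0,1), by decide, by decide, adj _ (by decide), adj _ (by decide)⟩

lemma reach_superset {S T : Set (ℤ × ℤ)} (hST : S ⊆ T) {u v : ↥S}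
    (h : (triGrid.induce S).Reachable u v) :
    (triGrid.induce T).Reachable ⟨u.1, hST u.2⟩ ⟨v.1, hST v.2⟩ := by
  obtain ⟨w⟩ := h
  induction w with
  | nil => exact Reachable.refl _
  | @cons a x c h w ih =>
    have h' : (triGrid.induce T).Adj ⟨a.1, hST a.2⟩ ⟨x.1, hST x.2⟩ := h
    exact Reachable.trans (Adj.reachable h') ih

lemma comp_walk_reach {S : Set (ℤ × ℤ)} (G' : SimpleGraph ↥S)
    (hG' : ∀ u v : ↥S, G'.Adj u v → triGrid.Adj u.1 v.1)
    (K : G'.ConnectedComponent) :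
    ∀ {u v : ↥S} (_ : G'.Walk u v), G'.connectedComponentMk u = K →
      ∃ (hu' : u.1 ∈ Subtype.val '' K.supp) (hv' : v.1 ∈ Subtype.val '' K.supp),
        (triGrid.induce (Subtype.val '' K.supp)).Reachable ⟨u.1, hu'⟩ ⟨v.1, hv'⟩ := by
  intro u v w
  induction w with
  | nil =>
    intro hu
    exact ⟨⟨_, hu, rfl⟩, ⟨_, hu, rfl⟩, Reachable.refl _⟩
  | @cons a x c h w ih =>
    intro hu
    have hx : G'.connectedComponentMk x = K :=
      (ConnectedComponent.sound h.symm.reachable).trans hu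
    obtain ⟨hx', hv', hr⟩ := ih hx
    have hu' : a.1 ∈ Subtype.val '' K.supp := ⟨_, hu, rfl⟩
    refine ⟨hu', hv', Reachable.trans (Adj.reachable ?_) hr⟩
    exact hG' _ _ h

/-- Splitting a simple region at a portal yields simple regions: if `P` is a
`q`-portal of the simple connected induced subgraph on `V` with `P ≠ V`, and `C` is a
connected component of the subgraph induced on `V \ P`, then `C ∪ P` induces a connected
subgraph and has no inner holes. -/
theorem split_at_portal_simple (V : Set (ℤ × ℤ)) (hfin : V.Finite) (hne : V.Nonempty)
    (hconn : (triGrid.induce V).Connected) (hsimple : HoleFree V)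
    (e : ℤ × ℤ) (he : e ∈ ({(1, 0), (0, 1), (1, -1)} : Set (ℤ × ℤ)))
    (P : Set (ℤ × ℤ)) (hP : IsPortal V e P) (hPV : P ≠ V)
    (C : Set (ℤ × ℤ))
    (hC : ∃ D : (triGrid.induce (V \ P)).ConnectedComponent, C = Subtype.val '' D.supp) :
    (triGrid.induce (C ∪ P)).Connected ∧ HoleFree (C ∪ P) := by
  obtain ⟨PC, rfl⟩ := hP
  obtain ⟨D, rfl⟩ := hC
  have hPsub : (Subtype.val '' PC.supp) ⊆ V := by rintro p ⟨u, _, rfl⟩; exact u.2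
  have hCsub : (Subtype.val '' D.supp) ⊆ V \ (Subtype.val '' PC.supp) := by rintro c ⟨u, _, rfl⟩; exact u.2
  have hCPsub : (Subtype.val '' D.supp) ∪ (Subtype.val '' PC.supp) ⊆ V := by
    rintro x (hx | hx)
    · exact (hCsub hx).1
    · exact hPsub hx
  have hmemP' : ∀ p ∈ (Subtype.val '' PC.supp), ∃ hp : p ∈ V, portalMk V e ⟨p, hp⟩ = PC := by
    rintro p ⟨u, hu, rfl⟩; exact ⟨u.2, hu⟩
  have hmemC' : ∀ c ∈ (Subtype.val '' D.supp), ∃ hc : c ∈ V \ (Subtype.val '' PC.supp),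
      (triGrid.induce (V \ (Subtype.val '' PC.supp))).connectedComponentMk ⟨c, hc⟩ = D := by
    rintro c ⟨u, hu, rfl⟩; exact ⟨u.2, hu⟩
  obtain ⟨d₁, d₂, hfd₁, hfd₂, hadj₁, hadj₂⟩ := dirs e he
  have htfP : ∀ p q : ℤ × ℤ, p ∈ (Subtype.val '' PC.supp) → q ∈ (Subtype.val '' PC.supp) → tf e p = tf e q := by
    rintro p q ⟨u, hu, rfl⟩ ⟨v, hv, rfl⟩
    exact tf_const_on_portal V e (ConnectedComponent.exact (hu.trans hv.symm))
  obtain ⟨p₀, hp₀⟩ := Quot.exists_rep PC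
  have hp₀' : portalMk V e p₀ = PC := hp₀
  obtain ⟨c₀, hc₀⟩ := Quot.exists_rep D
  have hc₀' : (triGrid.induce (V \ (Subtype.val '' PC.supp))).connectedComponentMk c₀ = D := hc₀
  -- the bridge edge between C and P
  have hbridge : ∃ a b : ℤ × ℤ, a ∈ (Subtype.val '' D.supp) ∧ b ∈ (Subtype.val '' PC.supp) ∧ triGrid.Adj a b := by
    have claim : ∀ {u v : ↥V} (_ : (triGrid.induce V).Walk u v),
        u.1 ∈ (Subtype.val '' D.supp) → v.1 ∈ (Subtype.val '' PC.supp) → ∃ a b : ℤ × ℤ, a ∈ (Subtype.val '' D.supp) ∧ b ∈ (Subtype.val '' PC.supp) ∧ triGrid.Adj a b := by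
      intro u v w
      induction w with
      | nil => intro hu hv; exact absurd hv (hCsub hu).2
      | @cons a x c h w ih =>
        intro hu hv
        by_cases hxC : x.1 ∈ (Subtype.val '' D.supp)
        · exact ih hxC hv
        · by_cases hxP : x.1 ∈ (Subtype.val '' PC.supp)
          · exact ⟨a.1, x.1, hu, hxP, h⟩
          · exfalso
            have hxVP : x.1 ∈ V \ (Subtype.val '' PC.supp) := ⟨x.2, hxP⟩
            obtain ⟨hu2, hu3⟩ := hmemC' a.1 hu
            have hadj : (triGrid.induce (V \ (Subtype.val '' PC.supp))).Adj ⟨a.1, hu2⟩ ⟨x.1, hxVP⟩ := h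
            have hxD : (triGrid.induce (V \ (Subtype.val '' PC.supp))).connectedComponentMk ⟨x.1, hxVP⟩ = D :=
              (ConnectedComponent.sound hadj.symm.reachable).trans hu3
            exact hxC ⟨⟨x.1, hxVP⟩, hxD, rfl⟩
    obtain ⟨w⟩ := hconn.preconnected ⟨c₀.1, c₀.2.1⟩ p₀
    exact claim w ⟨c₀, hc₀', rfl⟩ ⟨p₀, hp₀', rfl⟩
  obtain ⟨a, b, haC, hbP, hab⟩ := hbridge
  constructor
  · -- Connected
    have reach_b : ∀ z : ↥((Subtype.val '' D.supp) ∪ (Subtype.val '' PC.supp)),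
        (triGrid.induce ((Subtype.val '' D.supp) ∪ (Subtype.val '' PC.supp))).Reachable z ⟨b, Or.inr hbP⟩ := by
      intro z
      rcases z.2 with hzC | hzP
      · obtain ⟨hz2, hz3⟩ := hmemC' z.1 hzC
        obtain ⟨ha2, ha3⟩ := hmemC' a haC
        have hr : (triGrid.induce (V \ (Subtype.val '' PC.supp))).Reachable ⟨z.1, hz2⟩ ⟨a, ha2⟩ :=
          ConnectedComponent.exact (hz3.trans ha3.symm)
        obtain ⟨w⟩ := hr
        obtain ⟨hu', hv', hr2⟩ := comp_walk_reach _ (fun u v h => h) D w hz3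
        have hr3 := reach_superset (Set.subset_union_left (t := (Subtype.val '' PC.supp))) hr2
        have hedge : (triGrid.induce ((Subtype.val '' D.supp) ∪ (Subtype.val '' PC.supp))).Adj ⟨a, Or.inl haC⟩ ⟨b, Or.inr hbP⟩ := hab
        exact Reachable.trans hr3 hedge.reachable
      · obtain ⟨hz2, hz3⟩ := hmemP' z.1 hzP
        obtain ⟨hb2, hb3⟩ := hmemP' b hbP
        have hr : (portalLineGraph V e).Reachable ⟨z.1, hz2⟩ ⟨b, hb2⟩ :=
          ConnectedComponent.exact (hz3.trans hb3.symm)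
        obtain ⟨w⟩ := hr
        obtain ⟨hu', hv', hr2⟩ := comp_walk_reach _ (fun u v (h : (portalLineGraph V e).Adj u v) => h.1) PC w hz3
        exact reach_superset (Set.subset_union_right (s := (Subtype.val '' D.supp))) hr2
    haveI : Nonempty ↥((Subtype.val '' D.supp) ∪ (Subtype.val '' PC.supp)) := ⟨⟨b, Or.inr hbP⟩⟩
    exact ⟨fun z₁ z₂ => (reach_b z₁).trans (reach_b z₂).symm⟩
  · -- HoleFree
    intro K
    by_contra hKinf
    have hKfin : K.supp.Finite := Set.not_infinite.mp hKinf
    set Hs := Subtype.val '' K.supp with hHs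
    have hHfin : Hs.Finite := hKfin.image _
    have hcompl : Vᶜ ⊆ ((Subtype.val '' D.supp) ∪ (Subtype.val '' PC.supp))ᶜ := Set.compl_subset_compl.mpr hCPsub
    have hHV : ∀ x : ↥(((Subtype.val '' D.supp) ∪ (Subtype.val '' PC.supp))ᶜ), x ∈ K.supp → x.1 ∈ V := by
      intro x hx
      by_contra hxV
      have hinf := hsimple ((triGrid.induce Vᶜ).connectedComponentMk ⟨x.1, hxV⟩)
      have hsub : Subtype.val ''
          ((triGrid.induce Vᶜ).connectedComponentMk ⟨x.1, hxV⟩).supp ⊆ Hs := by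
        rintro y ⟨u, hu, rfl⟩
        have hr : (triGrid.induce Vᶜ).Reachable u ⟨x.1, hxV⟩ := ConnectedComponent.exact hu
        have hr2 := reach_superset hcompl hr
        have hmk : (triGrid.induce ((Subtype.val '' D.supp) ∪ (Subtype.val '' PC.supp))ᶜ).connectedComponentMk ⟨u.1, hcompl u.2⟩ = K :=
          (ConnectedComponent.sound hr2).trans hx
        exact ⟨⟨u.1, hcompl u.2⟩, hmk, rfl⟩
      have h1 : (Subtype.val ''
          ((triGrid.induce Vᶜ).connectedComponentMk ⟨x.1, hxV⟩).supp).Finite :=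
        hHfin.subset hsub
      exact hinf (Set.Finite.of_finite_image h1 Subtype.val_injective.injOn)
    have hnbr : ∀ (x : ↥(((Subtype.val '' D.supp) ∪ (Subtype.val '' PC.supp))ᶜ)), x ∈ K.supp → ∀ y : ℤ × ℤ,
        triGrid.Adj y x.1 → y ∈ Hs ∨ y ∈ (Subtype.val '' PC.supp) := by
      intro x hx y hady
      by_cases hy : y ∈ (Subtype.val '' D.supp) ∪ (Subtype.val '' PC.supp)
      · rcases hy with hyC | hyP
        · exfalso
          have hxV := hHV x hx
          have hxVP : x.1 ∈ V \ (Subtype.val '' PC.supp) := ⟨hxV, fun hxP => x.2 (Or.inr hxP)⟩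
          obtain ⟨hy2, hy3⟩ := hmemC' y hyC
          have hadj : (triGrid.induce (V \ (Subtype.val '' PC.supp))).Adj ⟨y, hy2⟩ ⟨x.1, hxVP⟩ := hady
          have hxD : (triGrid.induce (V \ (Subtype.val '' PC.supp))).connectedComponentMk ⟨x.1, hxVP⟩ = D :=
            (ConnectedComponent.sound hadj.symm.reachable).trans hy3
          exact x.2 (Or.inl ⟨⟨x.1, hxVP⟩, hxD, rfl⟩)
        · exact Or.inr hyP
      · left
        have hadj : (triGrid.induce ((Subtype.val '' D.supp) ∪ (Subtype.val '' PC.supp))ᶜ).Adj ⟨y, hy⟩ x := hady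
        exact ⟨⟨y, hy⟩, (ConnectedComponent.sound hadj.reachable).trans hx, rfl⟩
    obtain ⟨k₀, hk₀⟩ := Quot.exists_rep K
    have hHne : Hs.Nonempty := ⟨k₀.1, ⟨k₀, hk₀, rfl⟩⟩
    obtain ⟨m, hmH, hmax⟩ := hHfin.toFinset.exists_max_image (tf e)
      (by simpa using hHne)
    obtain ⟨n, hnH, hmin⟩ := hHfin.toFinset.exists_min_image (tf e)
      (by simpa using hHne)
    rw [Set.Finite.mem_toFinset] at hmH hnH
    obtain ⟨xm, hxm, hxmv⟩ := hmH
    obtain ⟨xn, hxn, hxnv⟩ := hnH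
    have hadjm : triGrid.Adj (xm.1 + d₁) xm.1 := hadj₁ xm.1
    have hadjn : triGrid.Adj (xn.1 + d₂) xn.1 := hadj₂ xn.1
    have hmP : xm.1 + d₁ ∈ (Subtype.val '' PC.supp) := by
      rcases hnbr xm hxm _ hadjm with hH | hP
      · exfalso
        have h1 := hmax _ (hHfin.mem_toFinset.mpr hH)
        rw [tf_add, hfd₁, hxmv] at h1
        omega
      · exact hP
    have hnP : xn.1 + d₂ ∈ (Subtype.val '' PC.supp) := by
      rcases hnbr xn hxn _ hadjn with hH | hP
      · exfalso
        have h1 := hmin _ (hHfin.mem_toFinset.mpr hH)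
        rw [tf_add, hfd₂, hxnv] at h1
        omega
      · exact hP
    have heq := htfP _ _ hmP hnP
    rw [tf_add, tf_add, hfd₁, hfd₂, hxmv, hxnv] at heq
    have hmn : tf e n ≤ tf e m := hmin _ (hHfin.mem_toFinset.mpr ⟨xm, hxm, hxmv⟩)
    omega
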